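/- Let E be an admissible extension of a fuzzy argumentation framework FAF and let (A,a) be weakening defended by E, with S = SCC_FAF(A) the strongly connected component of A. Then (A,a) belongs to the defended part D_FAF(S,E), and (A,a) is weakening defended by E ∩ S in the restricted framework FAF↓_{R_FAF(S,E)}. -/

import Mathlib

open scoped Classical

noncomputable section

structure FAF (Args : Type) where
  arg : Args → ℝ
  atk : Args → Args → ℝ
  arg_mem : ∀ x, arg x ∈ Set.Icc (0:ℝ) 1
  atk_mem : ∀ x y, atk x y ∈ Set.Icc (0:ℝ) 1

namespace FAF

variable {Args : Type}

/-- fuzzy set inclusion: pointwise ≤ of membership degrees -/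
def incl (S T : Args → ℝ) : Prop := ∀ x, S x ≤ T x

/-- fuzzy set intersection: pointwise min -/
def inter (S T : Args → ℝ) : Args → ℝ := fun x => min (S x) (T x)

/-- an attack by an argument of degree `a`, along an attack of degree `ρ`, on an
argument of degree `b` is tolerable iff `min a ρ + b ≤ 1` (Gödel t-norm). -/
def Tolerable (a ρ b : ℝ) : Prop := min a ρ + b ≤ 1

/-- the result of weakening degree `b` by an attacker of degree `a` along `ρ`:
`b' = min (1 - min a ρ) b`. -/
def weaken (a ρ b : ℝ) : ℝ := min (1 - min a ρ) b

/-- `S` weakening defends the fuzzy argument `(x, c)` in `F`: for every `(B, 𝒜 B)` there is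
some `(A, S A)` weakening `(B, 𝒜 B)` to `(B, b')` such that `(B, b')` tolerably attacks `(x, c)`. -/
def Defends (F : FAF Args) (S : Args → ℝ) (x : Args) (c : ℝ) : Prop :=
  ∀ B : Args, ∃ A : Args,
    Tolerable (weaken (S A) (F.atk A B) (F.arg B)) (F.atk B x) c

/-- a fuzzy set is conflict-free iff all attacks between its elements are tolerable. -/
def ConflictFree (F : FAF Args) (E : Args → ℝ) : Prop :=
  ∀ A B : Args, Tolerable (E A) (F.atk A B) (E B)

/-- `E` is an admissible set in `C`: `E ⊆ C`, `E` conflict-free, and `E` weakening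
defends each of its elements. -/
def AdmissibleIn (F : FAF Args) (C E : Args → ℝ) : Prop :=
  (∀ x, 0 ≤ E x) ∧ incl E C ∧ F.ConflictFree E ∧ ∀ x, F.Defends E x (E x)

/-- the characteristic function of `F` in `C`: `S ↦ { (A,a) ∈ C ∣ S weakening defends (A,a) }`. -/
def charFun (F : FAF Args) (C S : Args → ℝ) : Args → ℝ :=
  fun x => sSup {c : ℝ | 0 ≤ c ∧ c ≤ C x ∧ F.Defends S x c}

/-- `E` is a complete extension in `C`: admissible in `C` and contains every fuzzy
argument of `C` that it weakening defends. -/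
def CompleteIn (F : FAF Args) (C E : Args → ℝ) : Prop :=
  F.AdmissibleIn C E ∧ ∀ x c, 0 ≤ c → c ≤ C x → F.Defends E x c → c ≤ E x

/-- `E` is a preferred extension in `C`: maximal (w.r.t. fuzzy set inclusion)
admissible set in `C`. -/
def PreferredIn (F : FAF Args) (C E : Args → ℝ) : Prop :=
  F.AdmissibleIn C E ∧ ∀ E', F.AdmissibleIn C E' → incl E E' → incl E' E

/-- `G` is the grounded extension of `F` in `C`: the least fixed point of the
characteristic function `F_{FAF,C}` among fuzzy subsets of `C`. -/
def IsGroundedIn (F : FAF Args) (C G : Args → ℝ) : Prop :=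
  (∀ x, 0 ≤ G x ∧ G x ≤ C x) ∧ F.charFun C G = G ∧
    ∀ G', (∀ x, 0 ≤ G' x ∧ G' x ≤ C x) → F.charFun C G' = G' → incl G G'

/-- an attack edge exists when the attack degree is positive -/
def Edge (F : FAF Args) (A B : Args) : Prop := 0 < F.atk A B

/-- path-equivalence: `A = B`, or there are chains of attacks from `A` to `B` and from `B` to `A`. -/
def PE (F : FAF Args) (A B : Args) : Prop :=
  A = B ∨ (Relation.TransGen F.Edge A B ∧ Relation.TransGen F.Edge B A)

/-- the strongly connected component of `A0`, as a fuzzy set (nodes with their belief degrees). -/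
def scc (F : FAF Args) (A0 : Args) : Args → ℝ :=
  fun B => if F.PE A0 B then F.arg B else 0

/-- the limited part `L_FAF(S,E)` of the SCC of `A0`:
`x ↦ max over (B, E B) outside the SCC attacking x of min (E B) (ρ B x)` (0 if none). -/
def limited (F : FAF Args) (A0 : Args) (E : Args → ℝ) : Args → ℝ :=
  fun x => sSup {v : ℝ | ∃ B : Args, ¬ F.PE A0 B ∧ F.Edge B x ∧ v = min (E B) (F.atk B x)}

/-- the residual part `R_FAF(S,E)`: each `x` in the SCC of `A0` gets degree
`min (𝒜 x) (1 - L_FAF(S,E) x)`. -/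
def residual (F : FAF Args) (A0 : Args) (E : Args → ℝ) : Args → ℝ :=
  fun x => if F.PE A0 x then min (F.arg x) (1 - F.limited A0 E x) else 0

/-- `(x,a)` is defended w.r.t. `E` against outside attackers: every `(B, 𝒜 B)` outside the SCC
of `A0` that sufficiently attacks `(x,a)` is weakened by some `(Cc, E Cc)` so that its attack
on `(x,a)` becomes tolerable. -/
def DefendedAt (F : FAF Args) (A0 : Args) (E : Args → ℝ) (x : Args) (a : ℝ) : Prop :=
  ∀ B : Args, ¬ F.PE A0 B → ¬ Tolerable (F.arg B) (F.atk B x) a →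
    ∃ Cc : Args, Tolerable (weaken (E Cc) (F.atk Cc B) (F.arg B)) (F.atk B x) a

/-- the defended part `D_FAF(S,E)` as a fuzzy set: the largest degree `a` below the residual
degree such that `(x,a)` is defended by `E` against all sufficient attackers from outside. -/
def defendedPart (F : FAF Args) (A0 : Args) (E : Args → ℝ) : Args → ℝ :=
  fun x => sSup {a : ℝ | 0 ≤ a ∧ a ≤ F.residual A0 E x ∧ F.DefendedAt A0 E x a}

/-- restriction `FAF↓_T` of `F` to a fuzzy set `T`: arguments get degrees of `T`,
attacks are kept within the support of `T`. -/
def restrict (F : FAF Args) (T : Args → ℝ) : FAF Args where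
  arg := fun x => max 0 (min 1 (T x))
  atk := fun x y => if 0 < T x ∧ 0 < T y then F.atk x y else 0
  arg_mem := fun x => ⟨le_max_left 0 _, max_le zero_le_one (min_le_left 1 _)⟩
  atk_mem := fun x y => by
    try dsimp only
    split
    · exact F.atk_mem x y
    · exact ⟨le_rfl, zero_le_one⟩

/-- the SCC of `A0` attacks the (distinct) SCC of `B0`. -/
def sccAttacks (F : FAF Args) (A0 B0 : Args) : Prop :=
  ¬ F.PE A0 B0 ∧ ∃ x y : Args, F.PE A0 x ∧ F.PE B0 y ∧ F.Edge x y

end FAF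

theorem defended_in_scc {Args : Type} (F : FAF Args) (E : Args → ℝ)
    (hE : F.AdmissibleIn F.arg E) (A : Args) (a : ℝ)
    (ha0 : 0 ≤ a) (haA : a ≤ F.arg A) (hdef : F.Defends E A a) :
    a ≤ F.defendedPart A E A ∧
      (F.restrict (F.residual A E)).Defends (FAF.inter E (F.scc A)) A a := by
  obtain ⟨hE0, hEsub, hcf, hEdef⟩ := hE
  have ha1 : a ≤ 1 := haA.trans (F.arg_mem A).2
  -- E B is below every weakening produced by conflict-freeness
  have hEweak : ∀ C B : Args, E B ≤ FAF.weaken (E C) (F.atk C B) (F.arg B) := by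
    intro C B
    have h := hcf C B
    unfold FAF.Tolerable at h
    exact le_min (by linarith) (hEsub B)
  -- limited values are bounded above by 1
  have hlim_bdd : ∀ x : Args, BddAbove {v : ℝ | ∃ B : Args, ¬ F.PE A B ∧ F.Edge B x ∧ v = min (E B) (F.atk B x)} := by
    intro x
    refine ⟨1, ?_⟩
    rintro v ⟨B, _, _, rfl⟩
    exact (min_le_right _ _).trans (F.atk_mem B x).2
  -- limited A E x ≤ 1 - E x
  have hlimE : ∀ x : Args, F.limited A E x ≤ 1 - E x := by
    intro x
    apply Real.sSup_le
    · rintro v ⟨B, _, _, rfl⟩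
      have h := hcf B x
      unfold FAF.Tolerable at h
      linarith
    · have := (hEsub x).trans (F.arg_mem x).2
      linarith
  have hlim : F.limited A E A ≤ 1 - a := by
    apply Real.sSup_le _ (by linarith)
    rintro v ⟨B, hB, hEdge, rfl⟩
    obtain ⟨C, hC⟩ := hdef B
    unfold FAF.Tolerable at hC
    have h2 : min (E B) (F.atk B A) ≤ min (FAF.weaken (E C) (F.atk C B) (F.arg B)) (F.atk B A) :=
      min_le_min (hEweak C B) le_rfl
    linarith
  have hPEA : F.PE A A := Or.inl rfl
  have hres : a ≤ F.residual A E A := by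
    unfold FAF.residual
    rw [if_pos hPEA]
    exact le_min haA (by linarith)
  have hdat : F.DefendedAt A E A a := fun B _ _ => hdef B
  have hresle : ∀ x : Args, F.residual A E x ≤ F.arg x := by
    intro x
    unfold FAF.residual
    split
    · exact min_le_left _ _
    · exact (F.arg_mem x).1
  constructor
  · refine le_csSup ⟨F.residual A E A, ?_⟩ ⟨ha0, hres, hdat⟩
    rintro x ⟨_, hx, _⟩
    exact hx
  · intro B
    by_cases hBA : 0 < F.residual A E B ∧ 0 < F.residual A E A
    · -- the interesting case
      obtain ⟨hBpos, hApos⟩ := hBA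
      have hPEB : F.PE A B := by
        by_contra hPEB
        unfold FAF.residual at hBpos
        rw [if_neg hPEB] at hBpos
        exact lt_irrefl _ hBpos
      have hresB1 : F.residual A E B ≤ 1 := (hresle B).trans (F.arg_mem B).2
      have hargB : (F.restrict (F.residual A E)).arg B = F.residual A E B := by
        show max 0 (min 1 (F.residual A E B)) = _
        rw [min_eq_right hresB1, max_eq_right hBpos.le]
      have hatkBA : (F.restrict (F.residual A E)).atk B A = F.atk B A := by
        show (if _ then _ else _) = _
        rw [if_pos ⟨hBpos, hApos⟩]
      obtain ⟨C, hC⟩ := hdef B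
      unfold FAF.Tolerable at hC
      by_cases hCg : F.PE A C ∧ 0 < E C ∧ 0 < F.residual A E C
      · obtain ⟨hPEC, hECpos, hresC⟩ := hCg
        refine ⟨C, ?_⟩
        unfold FAF.Tolerable
        rw [hatkBA, hargB]
        have hint : FAF.inter E (F.scc A) C = E C := by
          unfold FAF.inter FAF.scc
          rw [if_pos hPEC]
          exact min_eq_left (hEsub C)
        rw [hint]
        have hatkCB : (F.restrict (F.residual A E)).atk C B = F.atk C B := by
          show (if _ then _ else _) = _
          rw [if_pos ⟨hresC, hBpos⟩]
        rw [hatkCB]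
        have hw : FAF.weaken (E C) (F.atk C B) (F.residual A E B) ≤
            FAF.weaken (E C) (F.atk C B) (F.arg B) :=
          min_le_min le_rfl (hresle B)
        have := min_le_min hw (le_refl (F.atk B A))
        linarith
      · -- C degenerate: residual B is itself below the weakened value
        have hkey : F.residual A E B ≤ 1 - min (E C) (F.atk C B) := by
          by_cases hEC : E C ≤ 0
          · have : E C = 0 := le_antisymm hEC (hE0 C)
            have : min (E C) (F.atk C B) ≤ 0 := by
              rw [this]; exact min_le_left _ _ |>.trans le_rfl
            linarith
          · push_neg at hEC
            by_cases hPEC : F.PE A C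
            · exfalso
              have hresC : ¬ 0 < F.residual A E C := fun h => hCg ⟨hPEC, hEC, h⟩
              push_neg at hresC
              unfold FAF.residual at hresC
              rw [if_pos hPEC] at hresC
              have hargC : 0 < F.arg C := lt_of_lt_of_le hEC (hEsub C)
              have h1 : 1 - F.limited A E C ≤ 0 := by
                rcases min_le_iff.mp hresC with h | h
                · linarith
                · exact h
              have := hlimE C
              linarith
            · by_cases hatk : 0 < F.atk C B
              · have hmem : min (E C) (F.atk C B) ∈
                    {v : ℝ | ∃ B' : Args, ¬ F.PE A B' ∧ F.Edge B' B ∧ v = min (E B') (F.atk B' B)} :=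
                  ⟨C, hPEC, hatk, rfl⟩
                have hle : min (E C) (F.atk C B) ≤ F.limited A E B := le_csSup (hlim_bdd B) hmem
                have : F.residual A E B ≤ 1 - F.limited A E B := by
                  unfold FAF.residual
                  rw [if_pos hPEB]
                  exact min_le_right _ _
                linarith
              · have : F.atk C B = 0 := le_antisymm (not_lt.mp hatk) (F.atk_mem C B).1
                have : min (E C) (F.atk C B) ≤ 0 := by rw [this]; exact min_le_right _ _
                linarith
        have hw : F.residual A E B ≤ FAF.weaken (E C) (F.atk C B) (F.arg B) :=
          le_min hkey (hresle B)
        refine ⟨B, ?_⟩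
        unfold FAF.Tolerable
        rw [hatkBA, hargB]
        have h1 : FAF.weaken (FAF.inter E (F.scc A) B) ((F.restrict (F.residual A E)).atk B B)
            (F.residual A E B) ≤ F.residual A E B := min_le_right _ _
        have h2 := min_le_min (h1.trans hw) (le_refl (F.atk B A))
        linarith
    · -- outside attack is dead in the restriction
      refine ⟨B, ?_⟩
      unfold FAF.Tolerable
      have hatkBA : (F.restrict (F.residual A E)).atk B A = 0 := by
        show (if _ then _ else _) = _
        rw [if_neg hBA]
      rw [hatkBA]
      have := min_le_right (FAF.weaken (FAF.inter E (F.scc A) B)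
        ((F.restrict (F.residual A E)).atk B B) ((F.restrict (F.residual A E)).arg B)) (0:ℝ)
      linarith
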